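/- For every k ≥ 1, every iteration i, and all k-tuples v⃗, u⃗ of vertices of a finite simple graph G: if the colorings agree initially (F_0 = O_0) then F_i(v⃗) = F_i(u⃗) implies O_i(v⃗) = O_i(u⃗). That is, at every iteration the folklore k-WL coloring refines the oblivious k-WL coloring. -/
import Mathlib


/-- Color type for the folklore k-WL coloring at iteration `i`, with initial colors in `κ`:
at each refinement step a multiset of `k`-vectors of previous colors is recorded. -/
def FColorK (κ : Type) (k : ℕ) : ℕ → Type
  | 0 => κ
  | (i+1) => FColorK κ k i × Multiset (Fin k → FColorK κ k i)

/-- Color type for the oblivious k-WL coloring at iteration `i`, with initial colors in `κ`: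
at each refinement step a `k`-vector of multisets of previous colors is recorded. -/
def OColorK (κ : Type) (k : ℕ) : ℕ → Type
  | 0 => κ
  | (i+1) => OColorK κ k i × (Fin k → Multiset (OColorK κ k i))

/-- The folklore k-WL coloring with initial coloring `C0`:
`F_0 = C0` and `F_{i+1}(v⃗) = (F_i(v⃗), ⟦(F_i(φ_1(v⃗,w)), …, F_i(φ_k(v⃗,w))) : w ∈ V⟧)`,
where `φ_j(v⃗,w)` replaces the `j`-th component of `v⃗` by `w`. -/
def fwlK {V : Type} [Fintype V] [DecidableEq V] {κ : Type} {k : ℕ}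
    (C0 : (Fin k → V) → κ) : (i : ℕ) → (Fin k → V) → FColorK κ k i
  | 0 => C0
  | (i+1) => fun v =>
      (fwlK C0 i v,
       (Finset.univ.val : Multiset V).map
         (fun w => fun j => fwlK C0 i (Function.update v j w)))

/-- The oblivious k-WL coloring with initial coloring `C0`:
`O_0 = C0` and `O_{i+1}(v⃗) = (O_i(v⃗), (⟦O_i(φ_j(v⃗,w)) : w ∈ V⟧)_{j=1,…,k})`. -/
def owlK {V : Type} [Fintype V] [DecidableEq V] {κ : Type} {k : ℕ}
    (C0 : (Fin k → V) → κ) : (i : ℕ) → (Fin k → V) → OColorK κ k i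
  | 0 => C0
  | (i+1) => fun v =>
      (owlK C0 i v,
       fun j => (Finset.univ.val : Multiset V).map
         (fun w => owlK C0 i (Function.update v j w)))

/-- For every `k ≥ 1`, if the folklore and oblivious k-WL colorings start from the same
initial coloring `C0` (determined by the ordered isomorphism type of the induced subgraph
on the tuple), then at every iteration `i` the folklore coloring refines the oblivious one:
`F_i(v⃗) = F_i(u⃗)` implies `O_i(v⃗) = O_i(u⃗)`. -/
theorem stmt_6 {V : Type} [Fintype V] [DecidableEq V] (G : SimpleGraph V) [DecidableRel G.Adj]
    {κ : Type} {k : ℕ} (hk : 1 ≤ k)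
    (C0 : (Fin k → V) → κ)
    (hC0 : ∀ v u : Fin k → V,
      ((∀ j j' : Fin k, (v j = v j' ↔ u j = u j') ∧ (G.Adj (v j) (v j') ↔ G.Adj (u j) (u j'))))
        ↔ C0 v = C0 u) :
    ∀ (i : ℕ) (v u : Fin k → V), fwlK C0 i v = fwlK C0 i u → owlK C0 i v = owlK C0 i u := by
  classical
  intro i
  induction i with
  | zero => intro v u h; exact h
  | succ i ih =>
    intro v u h
    have h1 : fwlK C0 i v = fwlK C0 i u := congrArg Prod.fst h
    have h2 : (Finset.univ.val : Multiset V).map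
        (fun w => fun j => fwlK C0 i (Function.update v j w)) =
        (Finset.univ.val : Multiset V).map
        (fun w => fun j => fwlK C0 i (Function.update u j w)) := congrArg Prod.snd h
    let g : FColorK κ k i → OColorK κ k i := fun c =>
      if hc : ∃ p, fwlK C0 i p = c then owlK C0 i hc.choose else owlK C0 i v
    have hg : ∀ p, owlK C0 i p = g (fwlK C0 i p) := by
      intro p
      have hex : ∃ q, fwlK C0 i q = fwlK C0 i p := ⟨p, rfl⟩
      simp only [g, dif_pos hex]
      exact (ih _ _ hex.choose_spec).symm
    show (owlK C0 i v, fun j => (Finset.univ.val : Multiset V).map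
           (fun w => owlK C0 i (Function.update v j w))) =
         (owlK C0 i u, fun j => (Finset.univ.val : Multiset V).map
           (fun w => owlK C0 i (Function.update u j w)))
    refine Prod.ext (ih _ _ h1) ?_
    funext j
    have h3 : (Finset.univ.val : Multiset V).map
        (fun w => fwlK C0 i (Function.update v j w)) =
        (Finset.univ.val : Multiset V).map
        (fun w => fwlK C0 i (Function.update u j w)) := by
      have := congrArg (Multiset.map (fun f : Fin k → FColorK κ k i => f j)) h2
      simpa [Multiset.map_map, Function.comp] using this
    calc (Finset.univ.val : Multiset V).map (fun w => owlK C0 i (Function.update v j w))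
        = ((Finset.univ.val : Multiset V).map
            (fun w => fwlK C0 i (Function.update v j w))).map g := by
          simp [Multiset.map_map, Function.comp]
          exact Multiset.map_congr rfl (fun w _ => hg _)
      _ = ((Finset.univ.val : Multiset V).map
            (fun w => fwlK C0 i (Function.update u j w))).map g := by rw [h3]
      _ = (Finset.univ.val : Multiset V).map (fun w => owlK C0 i (Function.update u j w)) := by
          simp [Multiset.map_map, Function.comp]
          exact Multiset.map_congr rfl (fun w _ => (hg _).symm)
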